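/- arXiv:1001.3534 — 2 statements merged into one kernel-verified Lean document; each statement's English description precedes it below -/
import Mathlib

section
/- In a cocircuit graph of a uniform oriented matroid of rank 3 on n elements, every shortest path between two vertices v, w with L(v) ≠ -L(w) is crabbed. -/
open Finset

variable {E : Type*} [Fintype E] [DecidableEq E]

/-- The set of coordinates where the sign vector is `+`. -/
def plusSupp (X : E → SignType) : Finset E := univ.filter fun e => X e = 1

/-- The set of coordinates where the sign vector is `-`. -/
def minusSupp (X : E → SignType) : Finset E := univ.filter fun e => X e = -1

/-- The zero-support of a sign vector. -/
def zeroSupp (X : E → SignType) : Finset E := univ.filter fun e => X e = 0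

/-- The support of a sign vector. -/
def suppOf (X : E → SignType) : Finset E := univ.filter fun e => X e ≠ 0

/-- The separator of two sign vectors. -/
def sep (X Y : E → SignType) : Finset E :=
  univ.filter fun e => (X e = 1 ∧ Y e = -1) ∨ (X e = -1 ∧ Y e = 1)

/-- Adjacency of cocircuits: zero-supports differ in exactly two elements and separator empty. -/
def OMAdj (X Y : E → SignType) : Prop :=
  (symmDiff (zeroSupp X) (zeroSupp Y)).card = 2 ∧ sep X Y = ∅

/-- `C` is the cocircuit set of a uniform oriented matroid of rank `r` on `n` elements. -/
def IsUOM (n r : ℕ) (C : Finset (E → SignType)) : Prop :=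
  Fintype.card E = n ∧
  (∀ X ∈ C, (suppOf X).card = n - r + 1) ∧
  (∀ I : Finset E, I.card = n - r + 1 →
    ∃ X ∈ C, suppOf X = I ∧ -X ∈ C ∧ X ≠ -X ∧
      ∀ Y ∈ C, suppOf Y = I → Y = X ∨ Y = -X) ∧
  (∀ X ∈ C, ∀ Y ∈ C, X ≠ -Y → ∀ e ∈ sep X Y, ∃ Z ∈ C, Z e = 0 ∧
    ∀ f, f ≠ e → Z f = X f ∨ Z f = Y f ∨ Z f = 0)

/-- The cocircuit graph of a set of cocircuits. -/
def cocircuitGraph (C : Finset (E → SignType)) :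
    SimpleGraph {X : E → SignType // X ∈ C} where
  Adj X Y := OMAdj X.1 Y.1
  symm := by
    constructor
    intro X Y h
    obtain ⟨h1, h2⟩ := h
    refine ⟨by rwa [symmDiff_comm], ?_⟩
    rw [← h2]; unfold sep; ext e; simp; tauto
  loopless := by
    constructor
    intro X h
    simp [OMAdj, symmDiff_self] at h

/-- A sign labeling of a graph `G` with parameters `r`, `n`. -/
def IsSignLabeling {V : Type*} (G : SimpleGraph V) (n r : ℕ)
    (L : V → E → SignType) : Prop :=
  Fintype.card E = n ∧ Function.Injective L ∧
  (∀ v, (suppOf (L v)).card = n - r + 1) ∧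
  (∀ I : Finset E, I.card = n - r + 1 →
    ∃ v, suppOf (L v) = I ∧ (∃ w, L w = -L v) ∧ L v ≠ -L v ∧
      ∀ u, suppOf (L u) = I → L u = L v ∨ L u = -L v) ∧
  (∀ v w, G.Adj v w ↔ OMAdj (L v) (L w))

/-- A sign labeling is an OM-labeling if its image also satisfies elimination (C3). -/
def IsOMLabeling {V : Type*} (G : SimpleGraph V) (n r : ℕ)
    (L : V → E → SignType) : Prop :=
  IsSignLabeling G n r L ∧
  ∀ v w : V, L v ≠ -L w → ∀ e ∈ sep (L v) (L w), ∃ u : V, L u e = 0 ∧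
    ∀ f, f ≠ e → L u f = L v f ∨ L u f = L w f ∨ L u f = 0

/-- A walk is `(X,Y)`-crabbed w.r.t. a labeling `L` if every vertex on it has
positive part inside `X⁺ ∪ Y⁺` and negative part inside `X⁻ ∪ Y⁻`. -/
def Crabbed {V : Type*} {G : SimpleGraph V} (L : V → E → SignType)
    (X Y : E → SignType) {a b : V} (P : G.Walk a b) : Prop :=
  ∀ z ∈ P.support, plusSupp (L z) ⊆ plusSupp X ∪ plusSupp Y ∧
    minusSupp (L z) ⊆ minusSupp X ∪ minusSupp Y

lemma sep_mem {X Y : E → SignType} {c : E} :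
    c ∈ sep X Y ↔ (X c = 1 ∧ Y c = -1) ∨ (X c = -1 ∧ Y c = 1) := by simp [sep]

lemma mem_zeroSupp {X : E → SignType} {c : E} : c ∈ zeroSupp X ↔ X c = 0 := by simp [zeroSupp]

lemma mem_suppOf {X : E → SignType} {c : E} : c ∈ suppOf X ↔ X c ≠ 0 := by simp [suppOf]

lemma sep_comm' (X Y : E → SignType) : sep X Y = sep Y X := by
  ext c; simp [sep]; tauto

lemma sep_self (X : E → SignType) : sep X X = ∅ := by
  ext c; simp only [sep_mem, Finset.notMem_empty, iff_false]
  rintro (⟨h1, h2⟩ | ⟨h1, h2⟩) <;> rw [h1] at h2 <;> exact absurd h2 (by decide)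

lemma sep_neg_self (X : E → SignType) : sep X (-X) = suppOf X := by
  ext c
  simp only [sep_mem, mem_suppOf, Pi.neg_apply]
  cases h : X c <;> simp_all <;> decide

lemma not_mem_sep_left {X Y : E → SignType} {c : E} (h : X c = 0) : c ∉ sep X Y := by
  rw [sep_mem]; rintro (⟨h1, _⟩ | ⟨h1, _⟩) <;> rw [h] at h1 <;> exact absurd h1 (by decide)

lemma not_mem_sep_right {X Y : E → SignType} {c : E} (h : Y c = 0) : c ∉ sep X Y := by
  rw [sep_comm']; exact not_mem_sep_left h

lemma mem_sep_iff {X Y : E → SignType} {c : E} :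
    c ∈ sep X Y ↔ X c ≠ 0 ∧ Y c = -X c := by
  rw [sep_mem]; cases hX : X c <;> cases hY : Y c <;> simp_all <;> decide

/-- step lemma -/
lemma sep_step {X Y W : E → SignType} (h : sep X Y = ∅) :
    sep Y W ⊆ sep X W ∪ (zeroSupp X \ zeroSupp Y) := by
  intro c hc
  have hXY : c ∉ sep X Y := by rw [h]; exact Finset.notMem_empty c
  rw [sep_mem] at hc hXY
  simp only [Finset.mem_union, Finset.mem_sdiff, mem_zeroSupp, sep_mem]
  cases hX : X c <;> cases hY : Y c <;> cases hW : W c <;> simp_all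

section UOM

variable {n : ℕ} {C : Finset (E → SignType)}

lemma zeroSupp_eq_compl (X : E → SignType) : zeroSupp X = univ \ suppOf X := by
  ext c; simp [zeroSupp, suppOf]

lemma suppOf_eq_compl (X : E → SignType) : suppOf X = univ \ zeroSupp X := by
  ext c; simp [zeroSupp, suppOf, not_not]

lemma zeroSupp_neg (X : E → SignType) : zeroSupp (-X) = zeroSupp X := by
  ext c
  simp only [zeroSupp, Finset.mem_filter, Finset.mem_univ, true_and, Pi.neg_apply]
  constructor
  · intro hc; cases hx : X c <;> rw [hx] at hc <;> first | rfl | exact absurd hc (by decide)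
  · intro hc; rw [hc]; rfl

lemma zs_card (h : IsUOM n 3 C) (hn : 3 ≤ n) {X : E → SignType} (hX : X ∈ C) :
    (zeroSupp X).card = 2 := by
  have h2 := h.2.1 X hX
  have hc : (suppOf X).card ≤ n := h.1 ▸ (suppOf X).card_le_univ
  rw [zeroSupp_eq_compl, Finset.card_sdiff_of_subset (Finset.subset_univ _), Finset.card_univ, h.1, h2]
  omega

lemma supp_card_pos (h : IsUOM n 3 C) {X : E → SignType} (hX : X ∈ C) :
    (suppOf X).card ≠ 0 := by
  have h2 := h.2.1 X hX; omega

lemma eq_or_neg_of_supp_eq (h : IsUOM n 3 C) {X Y : E → SignType} (hX : X ∈ C) (hY : Y ∈ C)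
    (hs : suppOf X = suppOf Y) : Y = X ∨ Y = -X := by
  obtain ⟨X₀, hX₀C, hsupp₀, -, -, huniq⟩ := h.2.2.1 (suppOf X) (h.2.1 X hX)
  rcases huniq X hX rfl with h1 | h1 <;> rcases huniq Y hY hs.symm with h2 | h2 <;>
    subst h1 <;> simp_all

lemma eq_or_neg_of_zs_eq (h : IsUOM n 3 C) {X Y : E → SignType} (hX : X ∈ C) (hY : Y ∈ C)
    (hs : zeroSupp X = zeroSupp Y) : Y = X ∨ Y = -X := by
  refine eq_or_neg_of_supp_eq h hX hY ?_
  rw [suppOf_eq_compl, suppOf_eq_compl, hs]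

lemma adj_sdiff_card (h : IsUOM n 3 C) (hn : 3 ≤ n) {X Y : E → SignType}
    (hX : X ∈ C) (hY : Y ∈ C) (hadj : OMAdj X Y) :
    (zeroSupp X \ zeroSupp Y).card = 1 ∧ (zeroSupp Y \ zeroSupp X).card = 1 := by
  have hsd := hadj.1
  have hd : Disjoint (zeroSupp X \ zeroSupp Y) (zeroSupp Y \ zeroSupp X) :=
    disjoint_sdiff_sdiff
  have hu : (symmDiff (zeroSupp X) (zeroSupp Y)) =
      (zeroSupp X \ zeroSupp Y) ∪ (zeroSupp Y \ zeroSupp X) := by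
    rw [symmDiff_def]; rfl
  rw [hu, Finset.card_union_of_disjoint hd] at hsd
  have e1 : (zeroSupp X \ zeroSupp Y).card + (zeroSupp X ∩ zeroSupp Y).card
      = (zeroSupp X).card := Finset.card_sdiff_add_card_inter _ _
  have e2 : (zeroSupp Y \ zeroSupp X).card + (zeroSupp Y ∩ zeroSupp X).card
      = (zeroSupp Y).card := Finset.card_sdiff_add_card_inter _ _
  rw [Finset.inter_comm] at e2
  have := zs_card h hn hX; have := zs_card h hn hY
  omega

/-- F2: short walk between two cocircuits sharing a zero coordinate. -/
lemma exists_short_walk (h : IsUOM n 3 C) (hn : 3 ≤ n) :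
    ∀ (s : ℕ) (A B : E → SignType) (hA : A ∈ C) (hB : B ∈ C) (e : E),
      A e = 0 → B e = 0 → (sep A B).card ≤ s →
      ∃ W : (cocircuitGraph C).Walk ⟨A, hA⟩ ⟨B, hB⟩, W.length ≤ (sep A B).card + 1 := by
  intro s
  induction s with
  | zero =>
    intro A B hA hB e hAe hBe hcard
    have hsep : sep A B = ∅ := Finset.card_eq_zero.1 (Nat.le_zero.1 hcard)
    by_cases hAB : A = B
    · subst hAB
      exact ⟨SimpleGraph.Walk.nil, by simp⟩
    · -- adjacent
      have hzsne : zeroSupp A ≠ zeroSupp B := by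
        intro hzz
        rcases eq_or_neg_of_zs_eq h hA hB hzz with h1 | h1
        · exact hAB h1.symm
        · subst h1
          rw [sep_neg_self] at hsep
          exact supp_card_pos h hA (by rw [hsep]; simp)
      have hcA := zs_card h hn hA
      have hcB := zs_card h hn hB
      have hinter : (zeroSupp A ∩ zeroSupp B).card = 1 := by
        have hle : (zeroSupp A ∩ zeroSupp B).card ≤ 2 := by
          refine le_trans (Finset.card_le_card (Finset.inter_subset_left)) (le_of_eq hcA)
        have hee : e ∈ zeroSupp A ∩ zeroSupp B := by
          simp [Finset.mem_inter, mem_zeroSupp, hAe, hBe]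
        have hge : 1 ≤ (zeroSupp A ∩ zeroSupp B).card := Finset.card_pos.2 ⟨e, hee⟩
        rcases Nat.lt_or_ge (zeroSupp A ∩ zeroSupp B).card 2 with hlt | hge2
        · omega
        · exfalso
          have h1 : zeroSupp A ∩ zeroSupp B = zeroSupp A :=
            Finset.eq_of_subset_of_card_le Finset.inter_subset_left (by omega)
          have h2 : zeroSupp A ∩ zeroSupp B = zeroSupp B :=
            Finset.eq_of_subset_of_card_le Finset.inter_subset_right (by omega)
          exact hzsne (h1.symm.trans h2)
      have hadj : (cocircuitGraph C).Adj ⟨A, hA⟩ ⟨B, hB⟩ := by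
        refine ⟨?_, hsep⟩
        have hu : (symmDiff (zeroSupp A) (zeroSupp B)) =
            (zeroSupp A \ zeroSupp B) ∪ (zeroSupp B \ zeroSupp A) := by
          rw [symmDiff_def]; rfl
        rw [hu, Finset.card_union_of_disjoint disjoint_sdiff_sdiff]
        have e1 := Finset.card_sdiff_add_card_inter (zeroSupp A) (zeroSupp B)
        have e2 := Finset.card_sdiff_add_card_inter (zeroSupp B) (zeroSupp A)
        rw [Finset.inter_comm] at e2
        omega
      exact ⟨SimpleGraph.Walk.cons hadj SimpleGraph.Walk.nil, by simp⟩
  | succ s ih =>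
    intro A B hA hB e hAe hBe hcard
    rcases Nat.lt_or_ge s (sep A B).card with hgt | hle
    swap
    · exact ih A B hA hB e hAe hBe hle
    have hpos : 0 < (sep A B).card := by omega
    obtain ⟨c, hc⟩ := Finset.card_pos.1 hpos
    by_cases hAB : A = -B
    · have hBA : B = -A := by rw [hAB, neg_neg]
      have hzA := zs_card h hn hA
      obtain ⟨u, hu⟩ : ∃ u, u ∉ zeroSupp A := by
        by_contra hcon
        push_neg at hcon
        have : (univ : Finset E).card ≤ (zeroSupp A).card := Finset.card_le_card (fun x _ => hcon x)
        rw [Finset.card_univ, h.1] at this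
        omega
      have hAu : A u ≠ 0 := fun hh => hu (mem_zeroSupp.2 hh)
      have heu : e ≠ u := fun hh => hAu (hh ▸ hAe)
      have hIc : (univ \ {e, u} : Finset E).card = n - 3 + 1 := by
        rw [Finset.card_sdiff_of_subset (Finset.subset_univ _), Finset.card_univ, h.1,
          Finset.card_insert_of_notMem (by simp [heu]), Finset.card_singleton]
        omega
      obtain ⟨Z, hZC, hZs, -, -, -⟩ := h.2.2.1 _ hIc
      have hZe : Z e = 0 := by
        by_contra hh
        have := mem_suppOf.2 hh
        rw [hZs] at this; simp at this
      have hZu : Z u = 0 := by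
        by_contra hh
        have := mem_suppOf.2 hh
        rw [hZs] at this; simp at this
      have hAZ : sep A Z ⊆ (sep A B).erase u := by
        intro f hf
        obtain ⟨hAf, hZfv⟩ := mem_sep_iff.1 hf
        have hZf0 : Z f ≠ 0 := by
          rw [hZfv]; generalize A f = a at hAf ⊢; revert hAf; cases a <;> decide
        have hfu : f ≠ u := fun hh => hZf0 (hh ▸ hZu)
        refine Finset.mem_erase.2 ⟨hfu, mem_sep_iff.2 ⟨hAf, ?_⟩⟩
        simp [hBA]
      have hZB : sep Z B ⊆ (sep A B).erase u := by
        intro f hf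
        obtain ⟨hZf0, hBfv⟩ := mem_sep_iff.1 hf
        have hfu : f ≠ u := fun hh => hZf0 (hh ▸ hZu)
        rw [hBA, Pi.neg_apply, neg_inj] at hBfv
        refine Finset.mem_erase.2 ⟨hfu, mem_sep_iff.2 ⟨by rw [hBfv]; exact hZf0, ?_⟩⟩
        simp [hBA]
      have hu' : u ∈ sep A B := mem_sep_iff.2 ⟨hAu, by simp [hBA]⟩
      have hdisj : Disjoint (sep A Z) (sep Z B) := by
        rw [Finset.disjoint_left]
        intro f hf1 hf2
        obtain ⟨hAf, hZ1⟩ := mem_sep_iff.1 hf1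
        obtain ⟨hZf0, hB1⟩ := mem_sep_iff.1 hf2
        have hfAB := Finset.mem_of_mem_erase (hAZ hf1)
        obtain ⟨-, hBf⟩ := mem_sep_iff.1 hfAB
        rw [hZ1] at hB1
        rw [neg_neg] at hB1
        rw [hB1] at hBf
        generalize A f = a at hAf hBf; revert hAf hBf; cases a <;> decide
      have hsum : (sep A Z).card + (sep Z B).card ≤ s := by
        have := Finset.card_union_of_disjoint hdisj
        have hsub : sep A Z ∪ sep Z B ⊆ (sep A B).erase u := Finset.union_subset hAZ hZB
        have := Finset.card_le_card hsub
        have := Finset.card_erase_of_mem hu'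
        omega
      obtain ⟨W1, hW1⟩ := ih A Z hA hZC e hAe hZe (by omega)
      obtain ⟨W2, hW2⟩ := ih Z B hZC hB e hZe hBe (by omega)
      exact ⟨W1.append W2, by rw [SimpleGraph.Walk.length_append]; omega⟩
    obtain ⟨Z, hZC, hZc, hZf⟩ := h.2.2.2 A hA B hB hAB c hc
    have hAc : A c ≠ 0 := (mem_sep_iff.1 hc).1
    have hec : e ≠ c := fun hh => hAc (hh ▸ hAe)
    have hZe : Z e = 0 := by
      rcases hZf e hec with h1 | h1 | h1
      · rw [h1, hAe]
      · rw [h1, hBe]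
      · exact h1
    have hAZ : sep A Z ⊆ (sep A B).erase c := by
      intro f hf
      obtain ⟨hAf, hZfv⟩ := mem_sep_iff.1 hf
      have hZf0 : Z f ≠ 0 := by
        rw [hZfv]; intro hh; apply hAf; cases hfa : A f <;> simp_all <;> rfl
      have hfc : f ≠ c := fun hh => hZf0 (hh ▸ hZc)
      rcases hZf f hfc with h1 | h1 | h1
      · exfalso; rw [h1] at hZfv
        apply hAf; cases hfa : A f <;> rw [hfa] at hZfv <;> first | rfl | exact absurd hZfv (by decide)
      · refine Finset.mem_erase.2 ⟨hfc, mem_sep_iff.2 ⟨hAf, ?_⟩⟩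
        rw [← h1, hZfv]
      · exact absurd h1 hZf0
    have hZB : sep Z B ⊆ (sep A B).erase c := by
      intro f hf
      obtain ⟨hZf0, hBfv⟩ := mem_sep_iff.1 hf
      have hfc : f ≠ c := fun hh => hZf0 (hh ▸ hZc)
      rcases hZf f hfc with h1 | h1 | h1
      · refine Finset.mem_erase.2 ⟨hfc, mem_sep_iff.2 ⟨?_, ?_⟩⟩
        · rw [← h1]; exact hZf0
        · rw [← h1]; exact hBfv
      · exfalso; rw [h1] at hBfv
        have hBf0 : B f ≠ 0 := h1 ▸ hZf0
        apply hBf0; cases hfb : B f <;> rw [hfb] at hBfv <;> first | rfl | exact absurd hBfv (by decide)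
      · exact absurd h1 hZf0
    have hdisj : Disjoint (sep A Z) (sep Z B) := by
      rw [Finset.disjoint_left]
      intro f hf1 hf2
      obtain ⟨hAf, hZ1⟩ := mem_sep_iff.1 hf1
      obtain ⟨hZf0, hB1⟩ := mem_sep_iff.1 hf2
      -- Z f = -A f, B f = -Z f = A f ; but also need f ∈ sep A B? No:
      -- A f ≠ 0, B f = -Z f = -(-A f) = A f. Then f ∉ sep A B. But f could be anything.
      -- Instead: f ∈ sep A Z ⊆ sep A B: so A f = -B f. B f = A f and A f = -B f ⇒ B f = 0 ⇒ contra
      have hfAB := Finset.mem_of_mem_erase (hAZ hf1)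
      obtain ⟨-, hBf⟩ := mem_sep_iff.1 hfAB
      rw [hZ1] at hB1
      rw [neg_neg] at hB1
      rw [hB1] at hBf
      cases hfa : A f <;> rw [hfa] at hBf <;> simp_all
    have hsum : (sep A Z).card + (sep Z B).card ≤ s := by
      have := Finset.card_union_of_disjoint hdisj
      have hsub : sep A Z ∪ sep Z B ⊆ (sep A B).erase c := Finset.union_subset hAZ hZB
      have := Finset.card_le_card hsub
      have := Finset.card_erase_of_mem hc
      omega
    obtain ⟨W1, hW1⟩ := ih A Z hA hZC e hAe hZe (by omega)
    obtain ⟨W2, hW2⟩ := ih Z B hZC hB e hZe hBe (by omega)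
    exact ⟨W1.append W2, by rw [SimpleGraph.Walk.length_append]; omega⟩

end UOM

section Tight

variable {n : ℕ} {C : Finset (E → SignType)}

lemma tight (h : IsUOM n 3 C) (hn : 3 ≤ n) (x : ℕ → E → SignType) (m : ℕ) (hm : 2 ≤ m)
    (hxC : ∀ i ≤ m, x i ∈ C) (hadj : ∀ i < m, OMAdj (x i) (x (i+1)))
    (e : E) (s : SignType) (hs : s ≠ 0) (h0 : x 0 e = 0) (hme : x m e = 0)
    (hint : ∀ i, 0 < i → i < m → x i e = s) :
    (sep (x 0) (x m)).card + 2 ≤ m ∨ (x m = - x 0 ∧ m = (sep (x 0) (x m)).card + 1) := by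
  have hZcard : ∀ k ≤ m, (zeroSupp (x k)).card = 2 := fun k hk => zs_card h hn (hxC k hk)
  have hDcard : ∀ k < m, (zeroSupp (x k) \ zeroSupp (x (k+1))).card = 1 ∧
      (zeroSupp (x (k+1)) \ zeroSupp (x k)).card = 1 := by
    intro k hk
    exact adj_sdiff_card h hn (hxC k (by omega)) (hxC (k+1) (by omega)) (hadj k hk)
  have hstepS : ∀ k < m, sep (x 0) (x (k+1)) ⊆
      sep (x 0) (x k) ∪ (zeroSupp (x k) \ zeroSupp (x (k+1))) := by
    intro k hk
    have h1 := sep_step (W := x 0) ((hadj k hk).2)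
    rw [sep_comm' (x 0) (x (k+1)), sep_comm' (x 0) (x k)]
    exact h1
  have hstepT : ∀ k < m, sep (x k) (x m) ⊆
      sep (x (k+1)) (x m) ∪ (zeroSupp (x (k+1)) \ zeroSupp (x k)) := by
    intro k hk
    refine sep_step (W := x m) ?_
    rw [sep_comm']; exact (hadj k hk).2
  have hSstepcard : ∀ k < m, (sep (x 0) (x (k+1))).card ≤ (sep (x 0) (x k)).card + 1 := by
    intro k hk
    calc (sep (x 0) (x (k+1))).card ≤ _ := Finset.card_le_card (hstepS k hk)
    _ ≤ (sep (x 0) (x k)).card + (zeroSupp (x k) \ zeroSupp (x (k+1))).card :=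
        Finset.card_union_le _ _
    _ ≤ _ := by rw [(hDcard k hk).1]
  have hTstepcard : ∀ k < m, (sep (x k) (x m)).card ≤ (sep (x (k+1)) (x m)).card + 1 := by
    intro k hk
    calc (sep (x k) (x m)).card ≤ _ := Finset.card_le_card (hstepT k hk)
    _ ≤ (sep (x (k+1)) (x m)).card + (zeroSupp (x (k+1)) \ zeroSupp (x k)).card :=
        Finset.card_union_le _ _
    _ ≤ _ := by rw [(hDcard k hk).2]
  -- S 1 = ∅
  have he1 : x 1 e = s := hint 1 (by omega) (by omega)
  have hD0 : zeroSupp (x 0) \ zeroSupp (x 1) = {e} := by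
    have hee : e ∈ zeroSupp (x 0) \ zeroSupp (x 1) := by
      rw [Finset.mem_sdiff, mem_zeroSupp, mem_zeroSupp, he1]
      exact ⟨h0, hs⟩
    have h1 := (hDcard 0 (by omega)).1
    exact (Finset.eq_of_subset_of_card_le (Finset.singleton_subset_iff.2 hee)
      (by rw [h1, Finset.card_singleton])).symm
  have hS1 : sep (x 0) (x 1) = ∅ := by
    have hsub : sep (x 0) (x 1) ⊆ {e} := by
      have := hstepS 0 (by omega)
      rwa [sep_self, Finset.empty_union, hD0] at this
    rcases Finset.subset_singleton_iff.1 hsub with h1 | h1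
    · exact h1
    · exfalso
      have : e ∈ sep (x 0) (x 1) := h1 ▸ Finset.mem_singleton_self e
      exact not_mem_sep_left h0 this
  -- T (m-1) = ∅
  have hm1 : m - 1 + 1 = m := by omega
  have hem1 : x (m-1) e = s := hint (m-1) (by omega) (by omega)
  have hDm : zeroSupp (x m) \ zeroSupp (x (m-1)) = {e} := by
    have hee : e ∈ zeroSupp (x m) \ zeroSupp (x (m-1)) := by
      rw [Finset.mem_sdiff, mem_zeroSupp, mem_zeroSupp, hem1]
      exact ⟨hme, hs⟩
    have h1 := (hDcard (m-1) (by omega)).2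
    rw [hm1] at h1
    exact (Finset.eq_of_subset_of_card_le (Finset.singleton_subset_iff.2 hee)
      (by rw [h1, Finset.card_singleton])).symm
  have hTm1 : sep (x (m-1)) (x m) = ∅ := by
    have hsub : sep (x (m-1)) (x m) ⊆ {e} := by
      have := hstepT (m-1) (by omega)
      rw [hm1] at this
      rwa [sep_self, Finset.empty_union, hDm] at this
    rcases Finset.subset_singleton_iff.1 hsub with h1 | h1
    · exact h1
    · exfalso
      have : e ∈ sep (x (m-1)) (x m) := h1 ▸ Finset.mem_singleton_self e
      exact not_mem_sep_right hme this
  -- general chains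
  have hSgen : ∀ q, q ≤ m → ∀ p, p ≤ q → (sep (x 0) (x q)).card ≤ (sep (x 0) (x p)).card + (q - p) := by
    intro q
    induction q with
    | zero => intro _ p hp; interval_cases p; simp
    | succ q ihq =>
      intro hq p hp
      rcases Nat.lt_or_ge p (q+1) with hlt | hge
      · have h1 := hSstepcard q (by omega)
        have h2 := ihq (by omega) p (by omega)
        omega
      · have : p = q + 1 := by omega
        subst this; simp
  have hTgen : ∀ q, q ≤ m → ∀ p, p ≤ q → (sep (x p) (x m)).card ≤ (sep (x q) (x m)).card + (q - p) := by
    intro q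
    induction q with
    | zero => intro _ p hp; interval_cases p; simp
    | succ q ihq =>
      intro hq p hp
      rcases Nat.lt_or_ge p (q+1) with hlt | hge
      · have h1 := hTstepcard q (by omega)
        have h2 := ihq (by omega) p (by omega)
        omega
      · have : p = q + 1 := by omega
        subst this; simp
  have hSmB : (sep (x 0) (x m)).card ≤ m - 1 := by
    have := hSgen m le_rfl 1 (by omega)
    rw [hS1] at this
    simpa using this
  by_cases hbig : (sep (x 0) (x m)).card + 2 ≤ m
  · exact Or.inl hbig
  -- tight case
  have scard : (sep (x 0) (x m)).card = m - 1 := by omega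
  have hSexact : ∀ k, 1 ≤ k → k ≤ m → (sep (x 0) (x k)).card = k - 1 := by
    intro k h1k hkm
    have hup := hSgen m le_rfl k hkm
    have hdown := hSgen k hkm 1 h1k
    rw [hS1] at hdown
    simp only [Finset.card_empty] at hdown
    omega
  have hTexact : ∀ k, k ≤ m - 1 → (sep (x k) (x m)).card = m - 1 - k := by
    intro k hkm
    have hup := hTgen (m-1) (by omega) k hkm
    have hdown := hTgen k (by omega) 0 (by omega)
    rw [hTm1] at hup
    simp only [Finset.card_empty] at hup
    omega
  -- union decompositions
  have hSunion : ∀ k, 1 ≤ k → k < m →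
      sep (x 0) (x (k+1)) = sep (x 0) (x k) ∪ (zeroSupp (x k) \ zeroSupp (x (k+1))) ∧
      (sep (x 0) (x k)) ∩ (zeroSupp (x k) \ zeroSupp (x (k+1))) = ∅ := by
    intro k h1k hkm
    have hsub := hstepS k hkm
    have hc1 := hSexact k h1k (by omega)
    have hc2 := hSexact (k+1) (by omega) (by omega)
    have hDc := (hDcard k hkm).1
    have hule : (sep (x 0) (x k) ∪ (zeroSupp (x k) \ zeroSupp (x (k+1)))).card ≤ k := by
      have := Finset.card_union_le (sep (x 0) (x k)) (zeroSupp (x k) \ zeroSupp (x (k+1)))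
      omega
    have hequ : sep (x 0) (x (k+1)) = sep (x 0) (x k) ∪ (zeroSupp (x k) \ zeroSupp (x (k+1))) :=
      Finset.eq_of_subset_of_card_le hsub (by omega)
    refine ⟨hequ, ?_⟩
    have hint' := Finset.card_inter_add_card_union (sep (x 0) (x k))
      (zeroSupp (x k) \ zeroSupp (x (k+1)))
    rw [← hequ] at hint'
    have : ((sep (x 0) (x k)) ∩ (zeroSupp (x k) \ zeroSupp (x (k+1)))).card = 0 := by omega
    exact Finset.card_eq_zero.1 this
  have hTunion : ∀ k, 1 ≤ k → k ≤ m - 1 →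
      sep (x (k-1)) (x m) = sep (x k) (x m) ∪ (zeroSupp (x k) \ zeroSupp (x (k-1))) ∧
      (sep (x k) (x m)) ∩ (zeroSupp (x k) \ zeroSupp (x (k-1))) = ∅ := by
    intro k h1k hkm
    have hk1 : k - 1 + 1 = k := by omega
    have hsub := hstepT (k-1) (by omega)
    rw [hk1] at hsub
    have hc1 := hTexact k hkm
    have hc2 := hTexact (k-1) (by omega)
    have hDc := (hDcard (k-1) (by omega)).2
    rw [hk1] at hDc
    have hequ : sep (x (k-1)) (x m) = sep (x k) (x m) ∪ (zeroSupp (x k) \ zeroSupp (x (k-1))) := by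
      refine Finset.eq_of_subset_of_card_le hsub ?_
      have := Finset.card_union_le (sep (x k) (x m)) (zeroSupp (x k) \ zeroSupp (x (k-1)))
      omega
    refine ⟨hequ, ?_⟩
    have hint' := Finset.card_inter_add_card_union (sep (x k) (x m))
      (zeroSupp (x k) \ zeroSupp (x (k-1)))
    rw [← hequ] at hint'
    have : ((sep (x k) (x m)) ∩ (zeroSupp (x k) \ zeroSupp (x (k-1)))).card = 0 := by omega
    exact Finset.card_eq_zero.1 this
  -- S monotone
  have hSmono : ∀ q, q ≤ m → ∀ p, 1 ≤ p → p ≤ q → sep (x 0) (x p) ⊆ sep (x 0) (x q) := by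
    intro q
    induction q with
    | zero => intro _ p hp hpq; omega
    | succ q ihq =>
      intro hq p hp hpq
      rcases Nat.lt_or_ge p (q+1) with hlt | hge
      · refine subset_trans (ihq (by omega) p hp (by omega)) ?_
        rw [(hSunion q (by omega) (by omega)).1]
        exact Finset.subset_union_left
      · have : p = q + 1 := by omega
        subst this; rfl
  -- lookup: element of T 0 \ T k lies in some C j, j ≤ k
  have hlookup : ∀ k, k ≤ m - 1 → ∀ d, d ∈ sep (x 0) (x m) → d ∉ sep (x k) (x m) →
      ∃ j, 1 ≤ j ∧ j ≤ k ∧ d ∈ zeroSupp (x j) \ zeroSupp (x (j-1)) := by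
    intro k
    induction k with
    | zero => intro _ d hd1 hd2; exact absurd hd1 hd2
    | succ k ihk =>
      intro hk d hd1 hd2
      by_cases hdk : d ∈ sep (x k) (x m)
      · have hu := (hTunion (k+1) (by omega) hk).1
        have hk1 : k + 1 - 1 = k := by omega
        rw [hk1] at hu
        rw [hu] at hdk
        rcases Finset.mem_union.1 hdk with h1 | h1
        · exact absurd h1 hd2
        · exact ⟨k+1, by omega, le_rfl, by rwa [hk1]⟩
      · obtain ⟨j, hj1, hj2, hj3⟩ := ihk (by omega) d hd1 hdk
        exact ⟨j, hj1, by omega, hj3⟩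
  -- distinctness of the D's
  have hDdisj : ∀ i k, 1 ≤ i → i < k → k < m →
      Disjoint (zeroSupp (x i) \ zeroSupp (x (i+1))) (zeroSupp (x k) \ zeroSupp (x (k+1))) := by
    intro i k h1i hik hkm
    have h1 : zeroSupp (x i) \ zeroSupp (x (i+1)) ⊆ sep (x 0) (x (i+1)) := by
      rw [(hSunion i h1i (by omega)).1]
      exact Finset.subset_union_right
    have h2 : sep (x 0) (x (i+1)) ⊆ sep (x 0) (x k) := hSmono k (by omega) (i+1) (by omega) (by omega)
    have h3 := (hSunion k (by omega) hkm).2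
    rw [Finset.disjoint_left]
    intro a ha1 ha2
    have : a ∈ (sep (x 0) (x k)) ∩ (zeroSupp (x k) \ zeroSupp (x (k+1))) :=
      Finset.mem_inter.2 ⟨h2 (h1 ha1), ha2⟩
    rw [h3] at this
    exact Finset.notMem_empty a this
  -- main claim : D k = C k
  have hDC : ∀ k, 1 ≤ k → k ≤ m - 1 →
      zeroSupp (x k) \ zeroSupp (x (k+1)) = zeroSupp (x k) \ zeroSupp (x (k-1)) := by
    intro k
    induction k using Nat.strong_induction_on with
    | _ k ihk =>
      intro h1k hkm
      have hDc := (hDcard k (by omega)).1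
      obtain ⟨d, hd⟩ := Finset.card_eq_one.1 hDc
      have hdD : d ∈ zeroSupp (x k) \ zeroSupp (x (k+1)) := hd ▸ Finset.mem_singleton_self d
      have hdS : d ∈ sep (x 0) (x m) := by
        have h1 : d ∈ sep (x 0) (x (k+1)) := by
          rw [(hSunion k h1k (by omega)).1]
          exact Finset.mem_union_right _ hdD
        exact hSmono m le_rfl (k+1) (by omega) (by omega) h1
      have hdT : d ∉ sep (x k) (x m) := by
        refine not_mem_sep_left ?_
        exact mem_zeroSupp.1 (Finset.mem_sdiff.1 hdD).1
      obtain ⟨j, hj1, hj2, hj3⟩ := hlookup k hkm d hdS hdT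
      have hjk : j = k := by
        by_contra hne
        have hjlt : j < k := by omega
        have heq := ihk j hjlt hj1 (by omega)
        have hdis := hDdisj j k hj1 hjlt (by omega)
        have hdDj : d ∈ zeroSupp (x j) \ zeroSupp (x (j+1)) := by rw [heq]; exact hj3
        exact (Finset.disjoint_left.1 hdis) hdDj hdD
      subst hjk
      have hCc : (zeroSupp (x j) \ zeroSupp (x (j-1))).card = 1 := by
        have h1 := (hDcard (j-1) (by omega)).2
        have hj1' : j - 1 + 1 = j := by omega
        rwa [hj1'] at h1
      have : {d} = zeroSupp (x j) \ zeroSupp (x (j-1)) :=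
        Finset.eq_of_subset_of_card_le (Finset.singleton_subset_iff.2 hj3)
          (by rw [hCc, Finset.card_singleton])
      rw [hd, this]
  -- R constant
  have hR : ∀ k, 1 ≤ k → k ≤ m - 1 →
      zeroSupp (x k) ∩ zeroSupp (x (k+1)) = zeroSupp (x k) ∩ zeroSupp (x (k-1)) := by
    intro k h1k hkm
    rw [← Finset.sdiff_sdiff_self_left (zeroSupp (x k)) (zeroSupp (x (k+1))),
        ← Finset.sdiff_sdiff_self_left (zeroSupp (x k)) (zeroSupp (x (k-1))), hDC k h1k hkm]
  have hRconst : ∀ k, 1 ≤ k → k ≤ m - 1 →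
      zeroSupp (x k) ∩ zeroSupp (x (k+1)) = zeroSupp (x 0) ∩ zeroSupp (x 1) := by
    intro k
    induction k with
    | zero => omega
    | succ k ihk =>
      intro h1k hkm
      rcases Nat.eq_zero_or_pos k with hk0 | hkpos
      · subst hk0
        rw [hR 1 le_rfl (by omega)]
        norm_num
        exact Finset.inter_comm _ _
      · have h1 := hR (k+1) (by omega) hkm
        have hk1 : k + 1 - 1 = k := by omega
        rw [hk1] at h1
        rw [h1, Finset.inter_comm]
        exact ihk (by omega) (by omega)
  -- extract t
  have hRm : zeroSupp (x (m-1)) ∩ zeroSupp (x m) = zeroSupp (x 0) ∩ zeroSupp (x 1) := by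
    have := hRconst (m-1) (by omega) le_rfl
    rwa [hm1] at this
  have hRcard : (zeroSupp (x 0) ∩ zeroSupp (x 1)).card = 1 := by
    have h1 := Finset.card_sdiff_add_card_inter (zeroSupp (x 0)) (zeroSupp (x 1))
    have h2 := (hDcard 0 (by omega)).1
    norm_num at h2
    have h3 := hZcard 0 (by omega)
    omega
  obtain ⟨t, ht⟩ := Finset.card_eq_one.1 hRcard
  have htR : t ∈ zeroSupp (x 0) ∩ zeroSupp (x 1) := ht ▸ Finset.mem_singleton_self t
  have ht0 : t ∈ zeroSupp (x 0) := (Finset.mem_inter.1 htR).1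
  have ht1 : t ∈ zeroSupp (x 1) := (Finset.mem_inter.1 htR).2
  have htm : t ∈ zeroSupp (x m) := by
    have : t ∈ zeroSupp (x (m-1)) ∩ zeroSupp (x m) := hRm ▸ htR
    exact (Finset.mem_inter.1 this).2
  have hte : t ≠ e := by
    intro hh
    subst hh
    rw [mem_zeroSupp, he1] at ht1
    exact hs ht1
  have hpair : ∀ k, k ≤ m → t ∈ zeroSupp (x k) → e ∈ zeroSupp (x k) → zeroSupp (x k) = {e, t} := by
    intro k hk htk hek
    have hsub : {e, t} ⊆ zeroSupp (x k) := by
      intro a ha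
      rcases Finset.mem_insert.1 ha with h1 | h1
      · subst h1; exact hek
      · rw [Finset.mem_singleton.1 h1]; exact htk
    refine (Finset.eq_of_subset_of_card_le hsub ?_).symm
    rw [hZcard k hk, Finset.card_insert_of_notMem (by simp [hte.symm]), Finset.card_singleton]
  have hz0 : zeroSupp (x 0) = {e, t} := hpair 0 (by omega) ht0 (mem_zeroSupp.2 h0)
  have hzm : zeroSupp (x m) = {e, t} := hpair m le_rfl htm (mem_zeroSupp.2 hme)
  rcases eq_or_neg_of_zs_eq h (hxC 0 (by omega)) (hxC m le_rfl) (hz0.trans hzm.symm) with h1 | h1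
  · exfalso
    have hzero : (sep (x 0) (x m)).card = 0 := by rw [h1, sep_self]; rfl
    omega
  · exact Or.inr ⟨h1, by omega⟩

end Tight

lemma signtype_neg_ne_zero {a : SignType} (h : a ≠ 0) : -a ≠ 0 := by
  cases a <;> simp_all <;> decide

lemma conformal_zero {X Y : E → SignType} (h : sep X Y = ∅) {c : E} {s : SignType}
    (hs : s ≠ 0) (hY : Y c = s) (hX : X c ≠ s) : X c = 0 := by
  have hns : c ∉ sep X Y := by rw [h]; exact Finset.notMem_empty c
  rw [mem_sep_iff] at hns
  push_neg at hns
  by_contra hX0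
  have h2 := hns hX0
  rw [hY] at h2
  cases hxc : X c <;> rw [hxc] at h2 hX0 hX <;> cases hsv : s <;> rw [hsv] at h2 hX hs <;>
    simp_all <;> exact h2 rfl

lemma walk_segment {V : Type*} {G : SimpleGraph V} {u v : V} (P : G.Walk u v) :
    ∀ q, q ≤ P.length → ∀ p, p ≤ q →
    ∃ W : G.Walk (P.getVert p) (P.getVert q), W.length = q - p := by
  intro q
  induction q with
  | zero =>
    intro _ p hp
    interval_cases p
    exact ⟨SimpleGraph.Walk.nil, rfl⟩
  | succ q ihq =>
    intro hq p hp
    rcases Nat.lt_or_ge p (q+1) with hlt | hge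
    · obtain ⟨W, hW⟩ := ihq (by omega) p (by omega)
      exact ⟨W.concat (P.adj_getVert_succ (by omega)),
        by rw [SimpleGraph.Walk.length_concat]; omega⟩
    · have : p = q + 1 := by omega
      subst this
      exact ⟨SimpleGraph.Walk.nil, by simp⟩

section Main

variable {n : ℕ} {C : Finset (E → SignType)}

lemma main_contra (h : IsUOM n 3 C)
    (v w : {X : E → SignType // X ∈ C}) (hne : v.1 ≠ -w.1)
    (P : (cocircuitGraph C).Walk v w)
    (hlen : P.length = (cocircuitGraph C).dist v w)
    (z : {X : E → SignType // X ∈ C}) (hz : z ∈ P.support)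
    (e : E) (s : SignType) (hs : s ≠ 0) (hze : z.1 e = s)
    (hve : v.1 e ≠ s) (hwe : w.1 e ≠ s) : False := by
  obtain ⟨j, hjv, hjle⟩ := SimpleGraph.Walk.mem_support_iff_exists_getVert.1 hz
  have hje : (P.getVert j).1 e = s := by rw [hjv]; exact hze
  have hj0 : j ≠ 0 := by
    intro hh; subst hh; rw [P.getVert_zero] at hje; exact hve hje
  have hjd : j ≠ P.length := by
    intro hh; subst hh; rw [P.getVert_length] at hje; exact hwe hje
  have hadjP : ∀ i, i < P.length → OMAdj (P.getVert i).1 (P.getVert (i+1)).1 :=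
    fun i hi => P.adj_getVert_succ hi
  have hshort : ∀ p q, p ≤ q → q ≤ P.length →
      ∀ (W : (cocircuitGraph C).Walk (P.getVert p) (P.getVert q)), q - p ≤ W.length := by
    intro p q hpq hq W
    obtain ⟨W1, hW1⟩ := walk_segment P p (le_trans hpq hq) 0 (Nat.zero_le p)
    obtain ⟨W2, hW2⟩ := walk_segment P P.length le_rfl q hq
    have hd := SimpleGraph.dist_le
      (((W1.copy P.getVert_zero rfl).append W).append (W2.copy rfl P.getVert_length))
    rw [← hlen] at hd
    simp only [SimpleGraph.Walk.length_append, SimpleGraph.Walk.length_copy] at hd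
    omega
  -- small n cases
  have hsupc : ∀ X ∈ C, (suppOf X).card = n - 3 + 1 := h.2.1
  have hn1 : 1 ≤ n := by
    have h1 := hsupc v.1 v.2
    have h2 : (suppOf v.1).card ≤ n := h.1 ▸ (suppOf v.1).card_le_univ
    omega
  rcases Nat.lt_or_ge n 3 with hnlt | hn3
  · -- n ≤ 2
    have hzsc : ∀ X ∈ C, (zeroSupp X).card = n - 1 := by
      intro X hX
      have h1 := hsupc X hX
      rw [zeroSupp_eq_compl, Finset.card_sdiff_of_subset (Finset.subset_univ _), Finset.card_univ, h.1, h1]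
      omega
    by_cases hsupp : suppOf v.1 = suppOf w.1
    · rcases eq_or_neg_of_supp_eq h v.2 w.2 hsupp with h1 | h1
      · -- w = v
        have hvw : v = w := Subtype.ext h1.symm
        subst hvw
        have hd0 : P.length = 0 := by
          rw [hlen, SimpleGraph.dist_self]
        omega
      · exact hne (by rw [h1, neg_neg])
    · -- distinct supports ⇒ adjacent
      have hzs : zeroSupp v.1 ≠ zeroSupp w.1 := by
        intro hh; apply hsupp; rw [suppOf_eq_compl, suppOf_eq_compl, hh]
      have hn2 : n = 2 := by
        rcases Nat.lt_or_ge n 2 with h2 | h2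
        · exfalso
          apply hzs
          have e1 : (zeroSupp v.1).card = 0 := by rw [hzsc v.1 v.2]; omega
          have e2 : (zeroSupp w.1).card = 0 := by rw [hzsc w.1 w.2]; omega
          rw [Finset.card_eq_zero.1 e1, Finset.card_eq_zero.1 e2]
        · omega
      obtain ⟨α, hα⟩ := Finset.card_eq_one.1 (by rw [hzsc v.1 v.2, hn2] : (zeroSupp v.1).card = 1)
      obtain ⟨β, hβ⟩ := Finset.card_eq_one.1 (by rw [hzsc w.1 w.2, hn2] : (zeroSupp w.1).card = 1)
      have hαβ : α ≠ β := by
        intro hh; apply hzs; rw [hα, hβ, hh]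
      have hadjvw : (cocircuitGraph C).Adj v w := by
        constructor
        · rw [symmDiff_def, hα, hβ]
          have d1 : ({α} : Finset E) \ {β} = {α} :=
            Finset.sdiff_eq_self_of_disjoint (Finset.disjoint_singleton.2 hαβ)
          have d2 : ({β} : Finset E) \ {α} = {β} :=
            Finset.sdiff_eq_self_of_disjoint (Finset.disjoint_singleton.2 hαβ.symm)
          have : (({α} : Finset E) \ {β}) ⊔ (({β} : Finset E) \ {α}) = {α} ∪ {β} := by
            rw [d1, d2]; rfl
          rw [this, Finset.card_union_of_disjoint (Finset.disjoint_singleton.2 hαβ)]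
          rfl
        · -- sep = ∅ : supports are disjoint singletons
          ext c
          simp only [Finset.notMem_empty, iff_false]
          intro hc
          obtain ⟨hv0, hw0⟩ := mem_sep_iff.1 hc
          have hw0' : w.1 c ≠ 0 := by
            rw [hw0]; exact signtype_neg_ne_zero hv0
          have hcv : c ∈ suppOf v.1 := mem_suppOf.2 hv0
          have hcw : c ∈ suppOf w.1 := mem_suppOf.2 hw0'
          rw [suppOf_eq_compl, hα] at hcv
          rw [suppOf_eq_compl, hβ] at hcw
          simp only [Finset.mem_sdiff, Finset.mem_singleton] at hcv hcw
          -- supports are singletons: |suppOf v| = n - 3 + 1 = 1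
          obtain ⟨γ, hγ⟩ := Finset.card_eq_one.1 (by rw [hsupc v.1 v.2, hn2] : (suppOf v.1).card = 1)
          obtain ⟨δ, hδ⟩ := Finset.card_eq_one.1 (by rw [hsupc w.1 w.2, hn2] : (suppOf w.1).card = 1)
          have hγδ : γ ≠ δ := by
            intro hh
            apply hsupp; rw [hγ, hδ, hh]
          have hcγ : c = γ := by
            have := mem_suppOf.2 hv0
            rw [hγ, Finset.mem_singleton] at this; exact this
          have hcδ : c = δ := by
            have := mem_suppOf.2 hw0'
            rw [hδ, Finset.mem_singleton] at this; exact this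
          exact hγδ (hcγ ▸ hcδ ▸ rfl)
      have hd1 : P.length ≤ 1 := by
        rw [hlen]
        exact SimpleGraph.dist_le (SimpleGraph.Walk.cons hadjvw SimpleGraph.Walk.nil)
      omega
  -- main case n ≥ 3
  · have hjltd : j < P.length := by omega
    -- define a
    classical
    set Q : ℕ → Prop := fun i => (P.getVert i).1 e ≠ s with hQ
    have hQ0 : Q 0 := by rw [hQ]; simpa [P.getVert_zero] using hve
    set a := Nat.findGreatest Q j with ha
    have haj : a ≤ j := Nat.findGreatest_le j
    have haQ : Q a := Nat.findGreatest_spec (Nat.zero_le j) hQ0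
    have hamax : ∀ i, a < i → i ≤ j → (P.getVert i).1 e = s := by
      intro i h1 h2
      have := Nat.findGreatest_is_greatest (n := j) (P := Q) h1 h2
      rw [hQ] at this
      simpa using this
    have haltj : a < j := by
      rcases Nat.lt_or_ge a j with h1 | h1
      · exact h1
      · exfalso; apply haQ; have : a = j := by omega
        rw [this]; exact hje
    -- define b
    have hexb : ∃ k, j < k ∧ (P.getVert k).1 e ≠ s := by
      refine ⟨P.length, by omega, ?_⟩
      rw [P.getVert_length]; exact hwe
    set b := Nat.find hexb with hbdef
    obtain ⟨hjb, hbQ⟩ := Nat.find_spec hexb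
    have hbled : b ≤ P.length := Nat.find_le ⟨by omega, by rw [P.getVert_length]; exact hwe⟩
    have hbmin : ∀ i, j ≤ i → i < b → (P.getVert i).1 e = s := by
      intro i h1 h2
      rcases Nat.eq_or_lt_of_le h1 with h3 | h3
      · rw [← h3]; exact hje
      · have := Nat.find_min hexb h2
        push_neg at this
        exact this h3
    have hinterior : ∀ i, a < i → i < b → (P.getVert i).1 e = s := by
      intro i h1 h2
      rcases Nat.lt_or_ge j i with h3 | h3
      · exact hbmin i (by omega) h2
      · exact hamax i h1 h3
    -- zeros at a and b
    have hae0 : (P.getVert a).1 e = 0 := by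
      have hadj1 := hadjP a (by omega)
      have hnext : (P.getVert (a+1)).1 e = s := hinterior (a+1) (by omega) (by omega)
      exact conformal_zero hadj1.2 hs hnext haQ
    have hbe0 : (P.getVert b).1 e = 0 := by
      have hb1 : b - 1 + 1 = b := by omega
      have hadj1 := hadjP (b-1) (by omega)
      rw [hb1] at hadj1
      have hprev : (P.getVert (b-1)).1 e = s := hinterior (b-1) (by omega) (by omega)
      have hsymm : sep (P.getVert b).1 (P.getVert (b-1)).1 = ∅ := by
        rw [sep_comm']; exact hadj1.2
      exact conformal_zero hsymm hs hprev hbQ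
    have hm2 : 2 ≤ b - a := by omega
    -- apply tight
    have hab : a + (b - a) = b := by omega
    have hres0 := tight h hn3 (fun i => (P.getVert (a+i)).1) (b - a) hm2
      (fun i hi => (P.getVert (a+i)).2)
      (fun i hi => hadjP (a+i) (by omega))
      e s hs
      (by exact hae0)
      (by show (P.getVert (a + (b-a))).1 e = 0; rw [hab]; exact hbe0)
      (fun i h1 h2 => by
        show (P.getVert (a+i)).1 e = s
        exact hinterior (a+i) (by omega) (by omega))
    have hres : (sep (P.getVert a).1 (P.getVert (a + (b-a))).1).card + 2 ≤ b - a ∨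
        ((P.getVert (a + (b-a))).1 = -(P.getVert a).1 ∧
          b - a = (sep (P.getVert a).1 (P.getVert (a + (b-a))).1).card + 1) := hres0
    rw [hab] at hres
    rcases hres with hres | ⟨hanti, hmeq⟩
    · -- shortcut along the line
      obtain ⟨W, hW⟩ := exists_short_walk h hn3 ((sep (P.getVert a).1 (P.getVert b).1).card)
        (P.getVert a).1 (P.getVert b).1 (P.getVert a).2 (P.getVert b).2 e hae0 hbe0 le_rfl
      have := hshort a b (by omega) hbled W
      omega
    · -- antipodal case
      have hsepc : (sep (P.getVert a).1 (P.getVert b).1).card = n - 2 := by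
        rw [hanti, sep_neg_self, hsupc (P.getVert a).1 (P.getVert a).2]
        omega
      have hmn : b - a = n - 1 := by omega
      have hzsba : zeroSupp (P.getVert b).1 = zeroSupp (P.getVert a).1 := by
        rw [hanti, zeroSupp_neg]
      have hnot : ¬(a = 0 ∧ b = P.length) := by
        rintro ⟨h1, h2⟩
        apply hne
        rw [h1, P.getVert_zero] at hanti
        rw [h2, P.getVert_length] at hanti
        rw [hanti, neg_neg]
      -- helper for both directions
      have hkey : ∀ (p q : ℕ), p ≤ q → q ≤ P.length → q - p = n →
          (∃ r, (P.getVert p).1 r = 0 ∧ (P.getVert q).1 r = 0 ∧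
            (sep (P.getVert p).1 (P.getVert q).1).card ≤ n - 3) → False := by
        rintro p q hpq hqd hqp ⟨r, hr1, hr2, hr3⟩
        obtain ⟨W, hW⟩ := exists_short_walk h hn3 ((sep (P.getVert p).1 (P.getVert q).1).card)
          (P.getVert p).1 (P.getVert q).1 (P.getVert p).2 (P.getVert q).2 r hr1 hr2 le_rfl
        have := hshort p q hpq hqd W
        omega
      -- the card bound helper
      have hcardb : ∀ (p q : ℕ), q ≤ P.length → q = p + 1 →
          (zeroSupp (P.getVert p).1 ∩ zeroSupp (P.getVert q).1).card = 1 := by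
        intro p q hqd hq1
        subst hq1
        have hadj1 := hadjP p (by omega)
        have hsd := adj_sdiff_card h hn3 (P.getVert p).2 (P.getVert (p+1)).2 hadj1
        have hz1 := zs_card h hn3 (P.getVert p).2
        have e1 := Finset.card_sdiff_add_card_inter (zeroSupp (P.getVert p).1)
          (zeroSupp (P.getVert (p+1)).1)
        omega
      rcases Nat.lt_or_ge 0 a with hapos | ha0
      · -- use x (a-1) and x b
        have ham1 : a - 1 + 1 = a := by omega
        have hintc : (zeroSupp (P.getVert (a-1)).1 ∩ zeroSupp (P.getVert a).1).card = 1 :=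
          hcardb (a-1) a (by omega) (by omega)
        obtain ⟨r, hr⟩ := Finset.card_eq_one.1 hintc
        have hrmem : r ∈ zeroSupp (P.getVert (a-1)).1 ∩ zeroSupp (P.getVert a).1 :=
          hr ▸ Finset.mem_singleton_self r
        have hr1 : (P.getVert (a-1)).1 r = 0 := mem_zeroSupp.1 (Finset.mem_inter.1 hrmem).1
        have hr2 : (P.getVert b).1 r = 0 := by
          rw [← mem_zeroSupp, hzsba]
          exact (Finset.mem_inter.1 hrmem).2
        refine hkey (a-1) b (by omega) hbled (by omega) ⟨r, hr1, hr2, ?_⟩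
        -- card bound
        have hsub : sep (P.getVert (a-1)).1 (P.getVert b).1 ⊆
            univ \ (zeroSupp (P.getVert (a-1)).1 ∪ zeroSupp (P.getVert b).1) := by
          intro c hc
          obtain ⟨h1, h2⟩ := mem_sep_iff.1 hc
          rw [Finset.mem_sdiff]
          refine ⟨Finset.mem_univ c, ?_⟩
          rw [Finset.mem_union]
          rintro (h3 | h3)
          · exact h1 (mem_zeroSupp.1 h3)
          · exact signtype_neg_ne_zero h1 (h2 ▸ mem_zeroSupp.1 h3)
        have hucard : (zeroSupp (P.getVert (a-1)).1 ∪ zeroSupp (P.getVert b).1).card = 3 := by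
          have e1 := Finset.card_inter_add_card_union (zeroSupp (P.getVert (a-1)).1)
            (zeroSupp (P.getVert b).1)
          have hz1 := zs_card h hn3 (P.getVert (a-1)).2
          have hz2 := zs_card h hn3 (P.getVert b).2
          have hic : (zeroSupp (P.getVert (a-1)).1 ∩ zeroSupp (P.getVert b).1).card = 1 := by
            rw [hzsba]; exact hintc
          omega
        have := Finset.card_le_card hsub
        rw [Finset.card_sdiff_of_subset (Finset.subset_univ _), Finset.card_univ, h.1, hucard] at this
        omega
      · -- a = 0, so b < length; use x a and x (b+1)
        have hbltd : b < P.length := by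
          rcases Nat.lt_or_ge b P.length with h1 | h1
          · exact h1
          · exfalso; exact hnot ⟨by omega, by omega⟩
        have hintc : (zeroSupp (P.getVert b).1 ∩ zeroSupp (P.getVert (b+1)).1).card = 1 :=
          hcardb b (b+1) (by omega) rfl
        obtain ⟨r, hr⟩ := Finset.card_eq_one.1 hintc
        have hrmem : r ∈ zeroSupp (P.getVert b).1 ∩ zeroSupp (P.getVert (b+1)).1 :=
          hr ▸ Finset.mem_singleton_self r
        have hr2 : (P.getVert (b+1)).1 r = 0 := mem_zeroSupp.1 (Finset.mem_inter.1 hrmem).2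
        have hr1 : (P.getVert a).1 r = 0 := by
          rw [← mem_zeroSupp, ← hzsba]
          exact (Finset.mem_inter.1 hrmem).1
        refine hkey a (b+1) (by omega) (by omega) (by omega) ⟨r, hr1, hr2, ?_⟩
        have hsub : sep (P.getVert a).1 (P.getVert (b+1)).1 ⊆
            univ \ (zeroSupp (P.getVert a).1 ∪ zeroSupp (P.getVert (b+1)).1) := by
          intro c hc
          obtain ⟨h1, h2⟩ := mem_sep_iff.1 hc
          rw [Finset.mem_sdiff]
          refine ⟨Finset.mem_univ c, ?_⟩
          rw [Finset.mem_union]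
          rintro (h3 | h3)
          · exact h1 (mem_zeroSupp.1 h3)
          · exact signtype_neg_ne_zero h1 (h2 ▸ mem_zeroSupp.1 h3)
        have hucard : (zeroSupp (P.getVert a).1 ∪ zeroSupp (P.getVert (b+1)).1).card = 3 := by
          have e1 := Finset.card_inter_add_card_union (zeroSupp (P.getVert a).1)
            (zeroSupp (P.getVert (b+1)).1)
          have hz1 := zs_card h hn3 (P.getVert a).2
          have hz2 := zs_card h hn3 (P.getVert (b+1)).2
          have hic : (zeroSupp (P.getVert a).1 ∩ zeroSupp (P.getVert (b+1)).1).card = 1 := by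
            rw [← hzsba]; exact hintc
          omega
        have := Finset.card_le_card hsub
        rw [Finset.card_sdiff_of_subset (Finset.subset_univ _), Finset.card_univ, h.1, hucard] at this
        omega

end Main

theorem stmt12 (n : ℕ) (C : Finset (E → SignType)) (h : IsUOM n 3 C)
    (v w : {X : E → SignType // X ∈ C}) (hne : v.1 ≠ -w.1)
    (P : (cocircuitGraph C).Walk v w) (hP : P.IsPath)
    (hlen : P.length = (cocircuitGraph C).dist v w) :
    Crabbed Subtype.val v.1 w.1 P := by
  intro z hz
  constructor
  · intro e he
    by_contra hcon
    rw [Finset.mem_union] at hcon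
    push_neg at hcon
    obtain ⟨h1, h2⟩ := hcon
    have hze : z.1 e = 1 := by simpa [plusSupp] using he
    have hv1 : v.1 e ≠ 1 := fun hh => h1 (by simpa [plusSupp] using hh)
    have hw1 : w.1 e ≠ 1 := fun hh => h2 (by simpa [plusSupp] using hh)
    exact main_contra h v w hne P hlen z hz e 1 (by decide) hze hv1 hw1
  · intro e he
    by_contra hcon
    rw [Finset.mem_union] at hcon
    push_neg at hcon
    obtain ⟨h1, h2⟩ := hcon
    have hze : z.1 e = -1 := by simpa [minusSupp] using he
    have hv1 : v.1 e ≠ -1 := fun hh => h1 (by simpa [minusSupp] using hh)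
    have hw1 : w.1 e ≠ -1 := fun hh => h2 (by simpa [minusSupp] using hh)
    exact main_contra h v w hne P hlen z hz e (-1) (by decide) hze hv1 hw1
end

section
/- Let M be a uniform oriented matroid with OM-labeling L of its cocircuit graph, v a vertex, and f ∈ L^0(v). Then v has at most one neighbor u with L(u)_f = + (uniqueness part of the regularity lemma): if u and u' are neighbors of v with L(u)_f = L(u')_f = +, then u = u'. -/
open Finset

variable {E : Type*} [Fintype E] [DecidableEq E]

lemma sep_eq_at {X Y : E → SignType} (h : sep X Y = ∅) {e : E}
    (hx : X e ≠ 0) (hy : Y e ≠ 0) : Y e = X e := by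
  have hm := Finset.eq_empty_iff_forall_notMem.mp h e
  simp only [sep, mem_filter, mem_univ, true_and] at hm
  cases hx' : X e <;> cases hy' : Y e <;> simp_all

lemma zeroSupp_card_add (X : E → SignType) :
    (zeroSupp X).card + (suppOf X).card = Fintype.card E := by
  classical
  rw [← Finset.card_union_of_disjoint]
  · congr 1
    ext e; simp [zeroSupp, suppOf]; tauto
  · simp [Finset.disjoint_left, zeroSupp, suppOf]

lemma suppOf_eq_of_zeroSupp_eq {X Y : E → SignType} (h : zeroSupp X = zeroSupp Y) :
    suppOf X = suppOf Y := by
  ext e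
  have := Finset.ext_iff.mp h e
  simp [suppOf, zeroSupp] at *
  tauto

lemma adj_struct {A B : Finset E} (hcard : A.card = B.card)
    (hsd : (symmDiff A B).card = 2) {f : E} (hfA : f ∈ A) (hfB : f ∉ B) :
    ∃ g, g ∉ A ∧ g ∈ B ∧ B = (A \ {f}) ∪ {g} := by
  classical
  have hdef : symmDiff A B = (A \ B) ∪ (B \ A) := by
    rw [symmDiff_def, Finset.sup_eq_union]
  have hdisj : Disjoint (A \ B) (B \ A) := disjoint_sdiff_sdiff
  have hsum : (A \ B).card + (B \ A).card = 2 := by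
    rw [← Finset.card_union_of_disjoint hdisj, ← hdef, hsd]
  have h1 : (A \ B).card + (A ∩ B).card = A.card := Finset.card_sdiff_add_card_inter A B
  have h2 : (B \ A).card + (B ∩ A).card = B.card := Finset.card_sdiff_add_card_inter B A
  have hinter : (A ∩ B).card = (B ∩ A).card := by rw [Finset.inter_comm]
  have ha1 : (A \ B).card = 1 := by omega
  have hb1 : (B \ A).card = 1 := by omega
  obtain ⟨g, hg⟩ := Finset.card_eq_one.mp hb1
  have hgBA : g ∈ B \ A := hg ▸ Finset.mem_singleton_self g
  have hgA : g ∉ A := (Finset.mem_sdiff.mp hgBA).2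
  have hgB : g ∈ B := (Finset.mem_sdiff.mp hgBA).1
  have hAB : A \ B = {f} := by
    obtain ⟨x, hx⟩ := Finset.card_eq_one.mp ha1
    have hfm : f ∈ ({x} : Finset E) := hx ▸ Finset.mem_sdiff.mpr ⟨hfA, hfB⟩
    rw [Finset.mem_singleton] at hfm
    rw [hx, hfm]
  refine ⟨g, hgA, hgB, ?_⟩
  ext e
  simp only [Finset.mem_union, Finset.mem_sdiff, Finset.mem_singleton]
  constructor
  · intro hB
    by_cases hA : e ∈ A
    · exact Or.inl ⟨hA, fun h => hfB (h ▸ hB)⟩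
    · right
      have : e ∈ B \ A := Finset.mem_sdiff.mpr ⟨hB, hA⟩
      rw [hg, Finset.mem_singleton] at this; exact this
  · rintro (⟨hA, hne⟩ | rfl)
    · by_contra hB
      have : e ∈ A \ B := Finset.mem_sdiff.mpr ⟨hA, hB⟩
      rw [hAB, Finset.mem_singleton] at this; exact hne this
    · exact hgB

lemma same_supp_cases {n r : ℕ} {C : Finset (E → SignType)}
    (hC2 : ∀ I : Finset E, I.card = n - r + 1 →
      ∃ X ∈ C, suppOf X = I ∧ -X ∈ C ∧ X ≠ -X ∧
        ∀ Y ∈ C, suppOf Y = I → Y = X ∨ Y = -X)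
    (hsupp : ∀ X ∈ C, (suppOf X).card = n - r + 1)
    {X Y : E → SignType} (hX : X ∈ C) (hY : Y ∈ C)
    (hs : suppOf X = suppOf Y) : Y = X ∨ Y = -X := by
  obtain ⟨X0, hX0C, hX0s, _, _, huniq⟩ := hC2 (suppOf X) (hsupp X hX)
  rcases huniq X hX rfl with h1 | h1 <;>
    rcases huniq Y hY hs.symm with h2 | h2 <;>
      simp [h1, h2, neg_neg]

lemma neg_mem_of_mem {n r : ℕ} {C : Finset (E → SignType)}
    (hC2 : ∀ I : Finset E, I.card = n - r + 1 →
      ∃ X ∈ C, suppOf X = I ∧ -X ∈ C ∧ X ≠ -X ∧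
        ∀ Y ∈ C, suppOf Y = I → Y = X ∨ Y = -X)
    (hsupp : ∀ X ∈ C, (suppOf X).card = n - r + 1)
    {X : E → SignType} (hX : X ∈ C) : -X ∈ C := by
  obtain ⟨X0, hX0C, hX0s, hnX0, _, huniq⟩ := hC2 (suppOf X) (hsupp X hX)
  rcases huniq X hX rfl with h1 | h1
  · rw [h1]; exact hnX0
  · rw [h1, neg_neg]; exact hX0C

theorem stmt16 (n r : ℕ) (C : Finset (E → SignType)) (h : IsUOM n r C)
    (v u u' : {X : E → SignType // X ∈ C}) (f : E) (hf : v.1 f = 0)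
    (hu : (cocircuitGraph C).Adj v u) (hu' : (cocircuitGraph C).Adj v u')
    (h1 : u.1 f = 1) (h2 : u'.1 f = 1) : u = u' := by
  classical
  obtain ⟨hcardE, hsupp, hC2, hC3⟩ := h
  obtain ⟨hsd, hsep⟩ : OMAdj v.1 u.1 := hu
  obtain ⟨hsd', hsep'⟩ : OMAdj v.1 u'.1 := hu'
  -- zero supports all have the same cardinality
  have hcard : ∀ X ∈ C, (zeroSupp X).card = n - (n - r + 1) := by
    intro X hX
    have := zeroSupp_card_add X
    rw [hsupp X hX, hcardE] at this
    omega
  have hfZv : f ∈ zeroSupp v.1 := by simp [zeroSupp, hf]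
  have hfZu : f ∉ zeroSupp u.1 := by simp [zeroSupp, h1]
  have hfZu' : f ∉ zeroSupp u'.1 := by simp [zeroSupp, h2]
  obtain ⟨g, hgA, hgB, hB⟩ := adj_struct
    (by rw [hcard _ v.2, hcard _ u.2]) hsd hfZv hfZu
  obtain ⟨g', hgA', hgB', hB'⟩ := adj_struct
    (by rw [hcard _ v.2, hcard _ u'.2]) hsd' hfZv hfZu'
  by_cases hgg : g = g'
  · -- same zero support, hence same support: conclude u = u'
    subst hgg
    have hzs : zeroSupp u.1 = zeroSupp u'.1 := by rw [hB, hB']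
    have hcase := same_supp_cases hC2 hsupp u.2 u'.2 (suppOf_eq_of_zeroSupp_eq hzs)
    rcases hcase with heq | heq
    · exact Subtype.ext heq.symm
    · exfalso
      have : u'.1 f = -(u.1 f) := by rw [heq]; rfl
      rw [h1, h2] at this
      exact absurd this (by decide)
  · -- g ≠ g' : eliminate f between u' and -u to get a contradiction
    exfalso
    have hnegu : -u.1 ∈ C := neg_mem_of_mem hC2 hsupp u.2
    have hfsep : f ∈ sep u'.1 (-u.1) := by
      simp only [sep, Finset.mem_filter, Finset.mem_univ, true_and]
      exact Or.inl ⟨h2, by rw [show (-u.1) f = -(u.1 f) from rfl, h1]⟩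
    have hne : u'.1 ≠ - -u.1 := by
      rw [neg_neg]; intro hc
      have : g ∈ zeroSupp u'.1 := by rw [hc]; exact hgB
      rw [hB'] at this
      rcases Finset.mem_union.mp this with hm | hm
      · exact hgA (Finset.mem_sdiff.mp hm).1
      · exact hgg (Finset.mem_singleton.mp hm)
    obtain ⟨Z, hZC, hZf, hZ⟩ := hC3 u'.1 u'.2 (-u.1) hnegu hne f hfsep
    -- zeroSupp v ⊆ zeroSupp Z
    have hsub : zeroSupp v.1 ⊆ zeroSupp Z := by
      intro e he
      by_cases hef : e = f
      · subst hef; simpa [zeroSupp] using hZf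
      · have heu : e ∈ zeroSupp u.1 := by
          rw [hB]; exact Finset.mem_union_left _ (Finset.mem_sdiff.mpr ⟨he, by simpa⟩)
        have heu' : e ∈ zeroSupp u'.1 := by
          rw [hB']; exact Finset.mem_union_left _ (Finset.mem_sdiff.mpr ⟨he, by simpa⟩)
        simp only [zeroSupp, mem_filter, mem_univ, true_and] at heu heu' ⊢
        rcases hZ e hef with hc | hc | hc
        · rw [hc, heu']
        · rw [hc, show (-u.1) e = -(u.1 e) from rfl, heu]; rfl
        · exact hc
    have hZeq : zeroSupp Z = zeroSupp v.1 := by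
      apply (Finset.eq_of_subset_of_card_le hsub ?_).symm
      rw [hcard _ v.2, hcard _ hZC]
    -- hence Z = v or Z = -v
    have hZcase := same_supp_cases hC2 hsupp v.2 hZC
      (suppOf_eq_of_zeroSupp_eq hZeq.symm)
    -- values at g and g'
    have hvg : v.1 g ≠ 0 := by
      intro hc; exact hgA (by simp [zeroSupp, hc])
    have hvg' : v.1 g' ≠ 0 := by
      intro hc; exact hgA' (by simp [zeroSupp, hc])
    have hgf : g ≠ f := fun hc => hgA (hc ▸ hfZv)
    have hgf' : g' ≠ f := fun hc => hgA' (hc ▸ hfZv)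
    have hug : u.1 g = 0 := by
      simpa [zeroSupp] using hgB
    have hu'g' : u'.1 g' = 0 := by
      simpa [zeroSupp] using hgB'
    have hu'g : u'.1 g ≠ 0 := by
      intro hc
      have : g ∈ zeroSupp u'.1 := by simp [zeroSupp, hc]
      rw [hB'] at this
      rcases Finset.mem_union.mp this with hm | hm
      · exact hgA (Finset.mem_sdiff.mp hm).1
      · exact hgg (Finset.mem_singleton.mp hm)
    have hug' : u.1 g' ≠ 0 := by
      intro hc
      have : g' ∈ zeroSupp u.1 := by simp [zeroSupp, hc]
      rw [hB] at this
      rcases Finset.mem_union.mp this with hm | hm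
      · exact hgA' (Finset.mem_sdiff.mp hm).1
      · exact hgg ((Finset.mem_singleton.mp hm).symm)
    have hu'gv : u'.1 g = v.1 g := sep_eq_at hsep' hvg hu'g
    have hugv' : u.1 g' = v.1 g' := sep_eq_at hsep hvg' hug'
    have hZg : Z g ≠ 0 := by
      intro hc
      have : g ∈ zeroSupp Z := by simp [zeroSupp, hc]
      rw [hZeq] at this; exact hgA this
    have hZg' : Z g' ≠ 0 := by
      intro hc
      have : g' ∈ zeroSupp Z := by simp [zeroSupp, hc]
      rw [hZeq] at this; exact hgA' this
    have hZgv : Z g = v.1 g := by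
      rcases hZ g hgf with hc | hc | hc
      · rw [hc, hu'gv]
      · exfalso; rw [show (-u.1) g = -(u.1 g) from rfl, hug] at hc
        exact hZg (by simpa using hc)
      · exact absurd hc hZg
    have hZgv' : Z g' = -(v.1 g') := by
      rcases hZ g' hgf' with hc | hc | hc
      · exact absurd (hc.trans hu'g') hZg'
      · rw [hc, show (-u.1) g' = -(u.1 g') from rfl, hugv']
      · exact absurd hc hZg'
    rcases hZcase with heq | heq
    · -- Z = v, contradiction at g'
      rw [heq] at hZgv'
      exact (by decide : ∀ a : SignType, a ≠ 0 → a = -a → False) _ hvg' hZgv'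
    · -- Z = -v, contradiction at g
      rw [heq, show (-v.1) g = -(v.1 g) from rfl] at hZgv
      exact (by decide : ∀ a : SignType, a ≠ 0 → -a = a → False) _ hvg hZgv
end
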